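/- For every nonnegative integer k, every nonnegative real number r, and all positive real numbers ℓ and N, there exists a real number N* ≥ (k+1)N such that the following holds. Let (G,φ) be a (0,ℓ]-bounded weighted graph, let S ⊆ V(G) with |S| ≤ k, let Z ⊆ N_{(G,φ)}^{≤r}[S], let m be a positive integer, let R ⊆ V(G), let c_Z : Z → {1,…,m}, and let c be an m-coloring of ((G,φ)−Z)^ℓ − R with weak diameter in (G,φ)^ℓ at most N. Then the m-coloring c ∪ c_Z|_{Z−R} of (G,φ)^ℓ − R has weak diameter in (G,φ)^ℓ at most N*. -/

import Mathlib

open scoped ENNReal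

/-- The length of a walk in an edge-weighted graph: the sum of the weights of its edges. -/
def walkLen {V : Type} {G : SimpleGraph V} (w : Sym2 V → ℝ) {x y : V} (p : G.Walk x y) : ℝ :=
  (p.edges.map w).sum

/-- The distance between two vertices of an edge-weighted graph: the infimum of the lengths
of paths between them (`⊤` if there is no such path). -/
noncomputable def wDist {V : Type} (G : SimpleGraph V) (w : Sym2 V → ℝ) (x y : V) : ℝ≥0∞ :=
  ⨅ q : {q : G.Walk x y // q.IsPath}, ENNReal.ofReal (walkLen w q.1)

lemma wDist_comm {V : Type} (G : SimpleGraph V) (w : Sym2 V → ℝ) (x y : V) :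
    wDist G w x y = wDist G w y x := by
  have key : ∀ a b : V, wDist G w a b ≤ wDist G w b a := by
    intro a b
    refine le_iInf fun q => ?_
    refine iInf_le_of_le ⟨q.1.reverse, q.2.reverse⟩ ?_
    simp [walkLen, List.sum_reverse]
  exact le_antisymm (key x y) (key y x)

/-- The power graph: two distinct vertices are adjacent iff their weighted distance
is at most `r`. -/
noncomputable def powerGraph {V : Type} (G : SimpleGraph V) (w : Sym2 V → ℝ) (r : ℝ) :
    SimpleGraph V where
  Adj x y := x ≠ y ∧ wDist G w x y ≤ ENNReal.ofReal r
  symm := ⟨by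
    rintro x y ⟨hne, hle⟩
    exact ⟨hne.symm, by rwa [wDist_comm]⟩⟩
  loopless := ⟨fun x h => h.1 rfl⟩

/-- The unit-length (hop) distance in an unweighted graph. -/
noncomputable def hopDist {V : Type} (L : SimpleGraph V) (x y : V) : ℝ≥0∞ :=
  ⨅ q : L.Walk x y, (q.length : ℝ≥0∞)

/-- Same-colour adjacency within a vertex set `A`. -/
def colorGraph {V : Type} (K : SimpleGraph V) (A : Set V) {m : ℕ} (c : V → Fin m) :
    SimpleGraph V where
  Adj x y := K.Adj x y ∧ x ∈ A ∧ y ∈ A ∧ c x = c y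
  symm := ⟨by
    rintro x y ⟨h, hx, hy, hc⟩
    exact ⟨h.symm, hy, hx, hc.symm⟩⟩
  loopless := ⟨fun x h => K.loopless.irrefl x h.1⟩

/-- The colouring `c` of the subgraph of `K` induced on `A` has weak diameter, measured by the
hop distance of `L`, at most `N`: any two vertices of a monochromatic component of `K ↾ A` are
at hop distance at most `N` in `L`. -/
def HasWeakDiamLE {V : Type} (K : SimpleGraph V) (A : Set V) (L : SimpleGraph V) {m : ℕ}
    (c : V → Fin m) (N : ℝ) : Prop :=
  ∀ x ∈ A, ∀ y ∈ A, (colorGraph K A c).Reachable x y → hopDist L x y ≤ ENNReal.ofReal N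

/-- `nbhd G w r S`: vertices joined to `S` by a path of weighted length at most `r`. -/
def nbhd {V : Type} (G : SimpleGraph V) (w : Sym2 V → ℝ) (r : ℝ) (S : Set V) : Set V :=
  {v | ∃ s ∈ S, ∃ q : G.Walk v s, q.IsPath ∧ walkLen w q ≤ r}

/-- Deleting a set of vertices (keeping them as isolated vertices of the ambient type). -/
def delVerts {V : Type} (G : SimpleGraph V) (Z : Set V) : SimpleGraph V where
  Adj x y := G.Adj x y ∧ x ∉ Z ∧ y ∉ Z
  symm := ⟨by
    rintro x y ⟨h, hx, hy⟩
    exact ⟨h.symm, hy, hx⟩⟩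
  loopless := ⟨fun x h => G.loopless.irrefl x h.1⟩

/-- A weighted graph: a finite simple graph together with positive edge weights. -/
structure WGraph : Type 1 where
  V : Type
  fin : Finite V
  G : SimpleGraph V
  w : Sym2 V → ℝ
  pos : ∀ e ∈ G.edgeSet, 0 < w e

/-- The extended metric on the vertex set of a weighted graph. -/
noncomputable def WGraph.dist (W : WGraph) : W.V → W.V → ℝ≥0∞ := wDist W.G W.w

/-- All edge weights lie in `(0, ℓ]`. -/
def WGraph.IsBounded (W : WGraph) (ℓ : ℝ) : Prop := ∀ e ∈ W.G.edgeSet, W.w e ≤ ℓ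

/-- `f` is an `n`-dimensional control function for the extended metric `d`. -/
def IsControlOn {X : Type} (d : X → X → ℝ≥0∞) (n : ℕ) (f : ℝ → ℝ) : Prop :=
  ∀ r : ℝ, 0 < r → ∃ U : Fin (n + 1) → Set (Set X),
    (∀ x : X, ∃ i, ∃ s ∈ U i, x ∈ s) ∧
    (∀ i, ∀ s ∈ U i, ∀ t ∈ U i, s ≠ t → ∀ x ∈ s, ∀ y ∈ t, ENNReal.ofReal r < d x y) ∧
    (∀ i, ∀ s ∈ U i, ∀ x ∈ s, ∀ y ∈ s, d x y ≤ ENNReal.ofReal (f r))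

/-- The asymptotic dimension of a class of weighted graphs is at most `n`. -/
def asdimLE (F : Set WGraph) (n : ℕ) : Prop :=
  ∃ f : ℝ → ℝ, (∀ x, 0 < x → 0 < f x) ∧ ∀ W ∈ F, IsControlOn W.dist n f

/-- The Assouad–Nagata dimension of a class of weighted graphs is at most `n`:
some dilation is a common `n`-dimensional control function. -/
def ANdimLE (F : Set WGraph) (n : ℕ) : Prop :=
  ∃ (f : ℝ → ℝ) (c : ℝ), 0 < c ∧ (∀ x, 0 < x → 0 < f x) ∧ (∀ x, 0 < x → f x ≤ c * x) ∧
    ∀ W ∈ F, IsControlOn W.dist n f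

/-- `H` is a minor of `G`: there are pairwise disjoint nonempty connected branch sets in `G`,
one for each vertex of `H`, with branch sets of adjacent vertices joined by an edge. -/
def IsMinorOf {α β : Type} (H : SimpleGraph β) (G : SimpleGraph α) : Prop :=
  ∃ B : β → Set α,
    (∀ h, (B h).Nonempty) ∧
    (∀ h h', h ≠ h' → Disjoint (B h) (B h')) ∧
    (∀ h, (G.induce (B h)).Connected) ∧
    (∀ h h', H.Adj h h' → ∃ a ∈ B h, ∃ b ∈ B h', G.Adj a b)

section Aux

open SimpleGraph

variable {V : Type} {G : SimpleGraph V} {w : Sym2 V → ℝ}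

@[simp] lemma walkLen_nil {x : V} : walkLen w (Walk.nil : G.Walk x x) = 0 := rfl

@[simp] lemma walkLen_cons {x y z : V} (h : G.Adj x y) (p : G.Walk y z) :
    walkLen w (Walk.cons h p) = w s(x, y) + walkLen w p := by simp [walkLen]

@[simp] lemma walkLen_append {x y z : V} (p : G.Walk x y) (q : G.Walk y z) :
    walkLen w (p.append q) = walkLen w p + walkLen w q := by
  simp [walkLen, Walk.edges_append]

lemma walkLen_nonneg (hpos : ∀ e ∈ G.edgeSet, 0 < w e) {x y : V} (p : G.Walk x y) :
    0 ≤ walkLen w p := by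
  apply List.sum_nonneg
  intro a ha
  rcases List.mem_map.mp ha with ⟨e, he, rfl⟩
  exact (hpos e (p.edges_subset_edgeSet he)).le

lemma wDist_le_walkLen {x y : V} (p : G.Walk x y) (hp : p.IsPath) :
    wDist G w x y ≤ ENNReal.ofReal (walkLen w p) :=
  iInf_le _ (⟨p, hp⟩ : {q : G.Walk x y // q.IsPath})

lemma exists_path_of_wDist_le [Finite V] {x y : V} {t : ℝ} (ht : 0 ≤ t)
    (h : wDist G w x y ≤ ENNReal.ofReal t) :
    ∃ p : G.Walk x y, p.IsPath ∧ walkLen w p ≤ t := by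
  classical
  cases nonempty_fintype V
  by_cases hne : Nonempty {q : G.Walk x y // q.IsPath}
  · haveI : Fintype {q : G.Walk x y // q.IsPath} := SimpleGraph.Path.instFintype (G := G)
    obtain ⟨q0, hq0⟩ := Finite.exists_min
      (fun q : {q : G.Walk x y // q.IsPath} => ENNReal.ofReal (walkLen w q.1))
    have hle : ENNReal.ofReal (walkLen w q0.1) ≤ ENNReal.ofReal t :=
      le_trans (le_iInf hq0) h
    exact ⟨q0.1, q0.2, (ENNReal.ofReal_le_ofReal_iff ht).mp hle⟩
  · exfalso
    haveI := not_nonempty_iff.mp hne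
    rw [wDist, iInf_of_empty] at h
    exact (lt_irrefl _ (lt_of_le_of_lt h ENNReal.ofReal_lt_top)).elim

lemma walk_split {x y : V} (p : G.Walk x y) (b : ℝ) (hb : 0 ≤ b)
    (hlen : b < walkLen w p) :
    ∃ (u v : V) (hadj : G.Adj u v) (p₁ : G.Walk x u) (p₂ : G.Walk v y),
      p = p₁.append (Walk.cons hadj p₂) ∧ walkLen w p₁ ≤ b ∧
        b < walkLen w p₁ + w s(u, v) := by
  induction p generalizing b with
  | nil => simp at hlen; linarith
  | @cons a a' y h q ih =>
    by_cases hw : b < w s(a, a')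
    · exact ⟨a, a', h, Walk.nil, q, by simp, by simp [hb], by simpa using hw⟩
    · push_neg at hw
      have h1 : b - w s(a, a') < walkLen w q := by
        simp only [walkLen_cons] at hlen; linarith
      obtain ⟨u, v, hadj, q₁, q₂, hEq, hle, hlt⟩ := ih (b - w s(a, a')) (by linarith) h1
      refine ⟨u, v, hadj, Walk.cons h q₁, q₂, ?_, ?_, ?_⟩
      · rw [Walk.cons_append, hEq]
      · simp only [walkLen_cons]; linarith
      · simp only [walkLen_cons]; linarith

lemma compress {ℓ : ℝ} (hl : 0 < ℓ) (hpos : ∀ e ∈ G.edgeSet, 0 < w e)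
    (hbd : ∀ e ∈ G.edgeSet, w e ≤ ℓ) :
    ∀ (n : ℕ) {x y : V} (p : G.Walk x y), p.IsPath → p.length ≤ n →
      ∃ q : (powerGraph G w ℓ).Walk x y, (q.length : ℝ) * (ℓ / 2) ≤ walkLen w p + ℓ / 2 := by
  intro n
  induction n with
  | zero =>
    intro x y p hp hlen
    cases p with
    | nil => exact ⟨Walk.nil, by simp; linarith⟩
    | cons h q => simp at hlen
  | succ n ih =>
    intro x y p hp hlen
    by_cases hsmall : walkLen w p ≤ ℓ
    · by_cases hxy : x = y
      · subst hxy
        refine ⟨Walk.nil, ?_⟩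
        simp only [Walk.length_nil, Nat.cast_zero, zero_mul]
        have := walkLen_nonneg hpos p
        linarith
      · refine ⟨Walk.cons (show (powerGraph G w ℓ).Adj x y from ⟨hxy, le_trans (wDist_le_walkLen p hp)
          (ENNReal.ofReal_le_ofReal hsmall)⟩) Walk.nil, ?_⟩
        have := walkLen_nonneg hpos p
        simp only [Walk.length_cons, Walk.length_nil]
        push_cast
        linarith
    · push_neg at hsmall
      obtain ⟨u, v, hadj, p₁, p₂, hEq, hle, hlt⟩ := walk_split p ℓ hl.le hsmall
      subst hEq
      have hp₁ : p₁.IsPath := hp.of_append_left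
      have hp₂ : p₂.IsPath := (hp.of_append_right).of_cons
      have hlen₂ : p₂.length ≤ n := by
        have := hlen
        simp only [Walk.length_append, Walk.length_cons] at this
        omega
      obtain ⟨q₂, hq₂⟩ := ih p₂ hp₂ hlen₂
      have hwuv : w s(u, v) ≤ ℓ := hbd _ (G.mem_edgeSet.mpr hadj)
      have hne : u ≠ v := hadj.ne
      have hopuv : (powerGraph G w ℓ).Adj u v := by
        refine ⟨hne, le_trans (wDist_le_walkLen (Walk.cons hadj Walk.nil) ?_)
          (ENNReal.ofReal_le_ofReal (by simpa using hwuv))⟩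
        exact (SimpleGraph.Path.singleton hadj).2
      have h₁nn : 0 ≤ walkLen w p₁ := walkLen_nonneg hpos p₁
      have h₂nn : 0 ≤ walkLen w p₂ := walkLen_nonneg hpos p₂
      by_cases hxu : x = u
      · subst hxu
        refine ⟨Walk.cons hopuv q₂, ?_⟩
        simp only [Walk.length_cons, walkLen_append, walkLen_cons]
        push_cast
        nlinarith [hq₂]
      · have hopxu : (powerGraph G w ℓ).Adj x u :=
          ⟨hxu, le_trans (wDist_le_walkLen p₁ hp₁) (ENNReal.ofReal_le_ofReal hle)⟩
        refine ⟨Walk.cons hopxu (Walk.cons hopuv q₂), ?_⟩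
        simp only [Walk.length_cons, walkLen_append, walkLen_cons]
        push_cast
        nlinarith [hq₂]

lemma walk_transfer (w : Sym2 V → ℝ) (Z : Set V) :
    ∀ {x y : V} (p : G.Walk x y), (∀ v ∈ p.support, v ∉ Z) →
      ∃ q : (delVerts G Z).Walk x y, q.support = p.support ∧ walkLen w q = walkLen w p := by
  intro x y p
  induction p with
  | nil => exact fun _ => ⟨Walk.nil, rfl, rfl⟩
  | @cons a a' b h t ih =>
    intro hs
    have hadj : (delVerts G Z).Adj a a' :=
      ⟨h, hs a (by simp), hs a' (by simp [Walk.start_mem_support])⟩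
    obtain ⟨q, hq1, hq2⟩ := ih (fun v hv => hs v (by simp [hv]))
    exact ⟨Walk.cons hadj q, by simp [hq1], by simp [hq2]⟩

lemma dichot [Finite V] {ℓ : ℝ} (hl : 0 < ℓ) (hpos : ∀ e ∈ G.edgeSet, 0 < w e)
    (Z : Set V) {x y : V} (hx : x ∉ Z) (hy : y ∉ Z)
    (h : (powerGraph G w ℓ).Adj x y) :
    (powerGraph (delVerts G Z) w ℓ).Adj x y ∨
      ∃ z ∈ Z, wDist G w x z ≤ ENNReal.ofReal ℓ := by
  classical
  obtain ⟨p, hp, hplen⟩ := exists_path_of_wDist_le hl.le h.2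
  by_cases hZ : ∀ v ∈ p.support, v ∉ Z
  · obtain ⟨q, hq1, hq2⟩ := walk_transfer w Z p hZ
    have hqpath : q.IsPath := by
      rw [Walk.isPath_def, hq1]
      exact hp.2
    left
    exact ⟨h.1, le_trans (wDist_le_walkLen q hqpath)
      (ENNReal.ofReal_le_ofReal (by rw [hq2]; exact hplen))⟩
  · push_neg at hZ
    obtain ⟨z, hzmem, hzZ⟩ := hZ
    right
    refine ⟨z, hzZ, ?_⟩
    have hsp := p.take_spec hzmem
    have hdnn : 0 ≤ walkLen w (p.dropUntil z hzmem) :=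
      walkLen_nonneg hpos _
    have htake : walkLen w (p.takeUntil z hzmem) ≤ ℓ := by
      have : walkLen w ((p.takeUntil z hzmem).append (p.dropUntil z hzmem)) = walkLen w p := by
        rw [hsp]
      rw [walkLen_append] at this
      linarith
    exact le_trans (wDist_le_walkLen _ (hp.takeUntil hzmem))
      (ENNReal.ofReal_le_ofReal htake)

lemma findFirst {K : SimpleGraph V} (Q : V → Prop) :
    ∀ {a b : V} (p : K.Walk a b), (∃ v ∈ p.support, Q v) →
      ∃ (u : V) (p₁ : K.Walk a u), Q u ∧ p₁.support ⊆ p.support ∧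
        ∀ v ∈ p₁.support.dropLast, ¬ Q v := by
  intro a b p
  induction p with
  | nil =>
    rintro ⟨v, hv, hQ⟩
    refine ⟨_, Walk.nil, ?_, by simp, by simp⟩
    simp only [Walk.support_nil, List.mem_singleton] at hv
    exact hv ▸ hQ
  | @cons a a' b h t ih =>
    intro hex
    by_cases hQa : Q a
    · exact ⟨a, Walk.nil, hQa, by simp [Walk.support_cons], by simp⟩
    · have hex' : ∃ v ∈ t.support, Q v := by
        obtain ⟨v, hv, hQ⟩ := hex
        simp only [Walk.support_cons, List.mem_cons] at hv
        rcases hv with rfl | hv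
        · exact absurd hQ hQa
        · exact ⟨v, hv, hQ⟩
      obtain ⟨u, p₁, hQu, hsub, hclean⟩ := ih hex'
      refine ⟨u, Walk.cons h p₁, hQu, ?_, ?_⟩
      · intro v hv
        simp only [Walk.support_cons, List.mem_cons] at hv ⊢
        rcases hv with rfl | hv
        · exact Or.inl rfl
        · exact Or.inr (hsub hv)
      · intro v hv
        rw [Walk.support_cons, List.dropLast_cons_of_ne_nil (Walk.support_ne_nil _)] at hv
        rcases List.mem_cons.mp hv with rfl | hv
        · exact hQa
        · exact hclean v hv

lemma walk_snoc {K : SimpleGraph V} :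
    ∀ {x u : V} (p : K.Walk x u),
      (p.support.dropLast = [] ∧ x = u) ∨
        ∃ (v : V) (t : K.Walk x v) (_ : K.Adj v u), p.support.dropLast = t.support := by
  intro x u p
  induction p with
  | nil => exact Or.inl ⟨by simp, rfl⟩
  | @cons a a' b h t ih =>
    right
    rcases ih with ⟨hd, rfl⟩ | ⟨v, t', h', hsup⟩
    · refine ⟨a, Walk.nil, h, ?_⟩
      rw [Walk.support_cons, List.dropLast_cons_of_ne_nil (Walk.support_ne_nil _), hd]
      simp
    · refine ⟨v, Walk.cons h t', h', ?_⟩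
      rw [Walk.support_cons, List.dropLast_cons_of_ne_nil (Walk.support_ne_nil _), hsup]
      simp

end Aux


section Aux2

open SimpleGraph

variable {V : Type} {G : SimpleGraph V} {w : Sym2 V → ℝ}

/-- `v` is near the centre `s`: a short hop-walk in the power graph. -/
def NearPt (G : SimpleGraph V) (w : Sym2 V → ℝ) (ℓ H : ℝ) (S : Set V) (v s : V) : Prop :=
  s ∈ S ∧ ∃ q : (powerGraph G w ℓ).Walk v s, (q.length : ℝ) ≤ H

/-- `v` is near some centre. -/
def NearV (G : SimpleGraph V) (w : Sym2 V → ℝ) (ℓ H : ℝ) (S : Set V) (v : V) : Prop :=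
  ∃ s, NearPt G w ℓ H S v s

variable {ℓ r N H : ℝ} {S Z R : Set V} {m : ℕ} {c c' : V → Fin m}

lemma near_of_mem_Z (hl : 0 < ℓ) (hr : 0 ≤ r) (hpos : ∀ e ∈ G.edgeSet, 0 < w e)
    (hbd : ∀ e ∈ G.edgeSet, w e ≤ ℓ) (hZ : Z ⊆ nbhd G w r S) (hH : H = 2 * r / ℓ + 4)
    {z : V} (hz : z ∈ Z) :
    ∃ s ∈ S, ∃ q : (powerGraph G w ℓ).Walk z s, (q.length : ℝ) ≤ 2 * r / ℓ + 1 := by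
  obtain ⟨s, hs, q0, hq0p, hq0len⟩ := hZ hz
  obtain ⟨q, hq⟩ := compress hl hpos hbd q0.length q0 hq0p le_rfl
  refine ⟨s, hs, q, ?_⟩
  have h1 : (q.length : ℝ) * ℓ ≤ 2 * r + ℓ := by linarith
  have h2 : 2 * r / ℓ + 1 = (2 * r + ℓ) / ℓ := by field_simp
  rw [h2, le_div_iff₀ hl]
  exact h1

lemma nearV_of_mem_Z (hl : 0 < ℓ) (hr : 0 ≤ r) (hpos : ∀ e ∈ G.edgeSet, 0 < w e)
    (hbd : ∀ e ∈ G.edgeSet, w e ≤ ℓ) (hZ : Z ⊆ nbhd G w r S) (hH : H = 2 * r / ℓ + 4)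
    {z : V} (hz : z ∈ Z) : NearV G w ℓ H S z := by
  obtain ⟨s, hs, q, hq⟩ := near_of_mem_Z hl hr hpos hbd hZ hH hz
  have : 0 ≤ 2 * r / ℓ := div_nonneg (by linarith) hl.le
  exact ⟨s, hs, q, by rw [hH]; linarith⟩

lemma nearV_of_close [Finite V] (hl : 0 < ℓ) (hr : 0 ≤ r) (hpos : ∀ e ∈ G.edgeSet, 0 < w e)
    (hbd : ∀ e ∈ G.edgeSet, w e ≤ ℓ) (hZ : Z ⊆ nbhd G w r S) (hH : H = 2 * r / ℓ + 4)
    {x z : V} (hz : z ∈ Z) (hclose : wDist G w x z ≤ ENNReal.ofReal ℓ) :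
    NearV G w ℓ H S x := by
  obtain ⟨p, hp, hplen⟩ := exists_path_of_wDist_le hl.le hclose
  obtain ⟨q1, hq1⟩ := compress hl hpos hbd p.length p hp le_rfl
  have hq1len : (q1.length : ℝ) ≤ 3 := by nlinarith
  obtain ⟨s, hs, q2, hq2⟩ := near_of_mem_Z hl hr hpos hbd hZ hH hz
  refine ⟨s, hs, q1.append q2, ?_⟩
  rw [Walk.length_append, hH]
  push_cast
  linarith

lemma edgeCase [Finite V] (hl : 0 < ℓ) (hr : 0 ≤ r) (hpos : ∀ e ∈ G.edgeSet, 0 < w e)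
    (hbd : ∀ e ∈ G.edgeSet, w e ≤ ℓ) (hZ : Z ⊆ nbhd G w r S) (hH : H = 2 * r / ℓ + 4)
    (h2 : ∀ v ∈ (Z ∪ R)ᶜ, c' v = c v) {u v : V}
    (huv : (colorGraph (powerGraph G w ℓ) Rᶜ c').Adj u v) :
    (NearV G w ℓ H S u ∧ NearV G w ℓ H S v) ∨
      (colorGraph (powerGraph (delVerts G Z) w ℓ) (Z ∪ R)ᶜ c).Adj u v := by
  obtain ⟨hP, hu, hv, hcc⟩ := huv
  by_cases huZ : u ∈ Z
  · left
    refine ⟨nearV_of_mem_Z hl hr hpos hbd hZ hH huZ, ?_⟩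
    by_cases hvZ : v ∈ Z
    · exact nearV_of_mem_Z hl hr hpos hbd hZ hH hvZ
    · exact nearV_of_close hl hr hpos hbd hZ hH huZ hP.symm.2
  by_cases hvZ : v ∈ Z
  · exact Or.inl ⟨nearV_of_close hl hr hpos hbd hZ hH hvZ hP.2,
      nearV_of_mem_Z hl hr hpos hbd hZ hH hvZ⟩
  have huA : u ∈ (Z ∪ R)ᶜ := by
    simp only [Set.mem_compl_iff, Set.mem_union, not_or]
    exact ⟨huZ, hu⟩
  have hvA : v ∈ (Z ∪ R)ᶜ := by
    simp only [Set.mem_compl_iff, Set.mem_union, not_or]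
    exact ⟨hvZ, hv⟩
  have hccc : c u = c v := by
    rw [← h2 u huA, ← h2 v hvA]; exact hcc
  rcases dichot hl hpos Z huZ hvZ hP with hP' | ⟨z, hzZ, hclose⟩
  · exact Or.inr ⟨hP', huA, hvA, hccc⟩
  have hNu := nearV_of_close hl hr hpos hbd hZ hH hzZ hclose
  rcases dichot hl hpos Z hvZ huZ hP.symm with hP' | ⟨z', hz'Z, hclose'⟩
  · exact Or.inr ⟨hP'.symm, huA, hvA, hccc⟩
  · exact Or.inl ⟨hNu, nearV_of_close hl hr hpos hbd hZ hH hz'Z hclose'⟩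

lemma tailClean [Finite V] (hl : 0 < ℓ) (hr : 0 ≤ r) (hpos : ∀ e ∈ G.edgeSet, 0 < w e)
    (hbd : ∀ e ∈ G.edgeSet, w e ≤ ℓ) (hZ : Z ⊆ nbhd G w r S) (hH : H = 2 * r / ℓ + 4)
    (h2 : ∀ v ∈ (Z ∪ R)ᶜ, c' v = c v) {u y : V}
    (p : (colorGraph (powerGraph G w ℓ) Rᶜ c').Walk u y)
    (hcl : ∀ v ∈ p.support.tail, ¬ NearV G w ℓ H S v) :
    u = y ∨ ((colorGraph (powerGraph (delVerts G Z) w ℓ) (Z ∪ R)ᶜ c).Reachable u y ∧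
      u ∈ (Z ∪ R)ᶜ ∧ y ∈ (Z ∪ R)ᶜ) := by
  induction p with
  | nil => exact Or.inl rfl
  | @cons a a' b hadj t ih =>
    have hv : ¬ NearV G w ℓ H S a' := by
      apply hcl a'
      rw [Walk.support_cons]
      exact t.start_mem_support
    rcases edgeCase hl hr hpos hbd hZ hH h2 hadj with ⟨_, hN⟩ | hAdj'
    · exact absurd hN hv
    · have ih' := ih (fun v hv' => hcl v (by
        rw [Walk.support_cons]
        exact List.mem_of_mem_tail hv'))
      rcases ih' with rfl | ⟨rch, _, hbA⟩
      · exact Or.inr ⟨hAdj'.reachable, hAdj'.2.1, hAdj'.2.2.1⟩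
      · exact Or.inr ⟨(hAdj'.reachable).trans rch, hAdj'.2.1, hbA⟩

lemma cleanSuffix [Finite V] (hl : 0 < ℓ) (hr : 0 ≤ r) (hN : 0 < N)
    (hpos : ∀ e ∈ G.edgeSet, 0 < w e)
    (hbd : ∀ e ∈ G.edgeSet, w e ≤ ℓ) (hZ : Z ⊆ nbhd G w r S) (hH : H = 2 * r / ℓ + 4)
    (h2 : ∀ v ∈ (Z ∪ R)ᶜ, c' v = c v)
    (hc : HasWeakDiamLE (powerGraph (delVerts G Z) w ℓ) (Z ∪ R)ᶜ (powerGraph G w ℓ) c N)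
    {u y : V} (p : (colorGraph (powerGraph G w ℓ) Rᶜ c').Walk u y)
    (hcl : ∀ v ∈ p.support.tail, ¬ NearV G w ℓ H S v) :
    ∃ q : (powerGraph G w ℓ).Walk u y, (q.length : ℝ) ≤ N + 1 := by
  rcases tailClean hl hr hpos hbd hZ hH h2 p hcl with rfl | ⟨rch, huA, hyA⟩
  · exact ⟨Walk.nil, by simp; linarith⟩
  · have hd := hc u huA y hyA rch
    have hd2 : hopDist (powerGraph G w ℓ) u y < ENNReal.ofReal (N + 1) :=
      lt_of_le_of_lt hd (by rw [ENNReal.ofReal_lt_ofReal_iff (by linarith)]; linarith)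
    rw [hopDist] at hd2
    obtain ⟨q, hq⟩ := iInf_lt_iff.mp hd2
    refine ⟨q, ?_⟩
    by_contra hcon
    push_neg at hcon
    have hge : ENNReal.ofReal (N + 1) ≤ ((q.length : ℕ) : ℝ≥0∞) := by
      rw [← ENNReal.ofReal_natCast]
      exact ENNReal.ofReal_le_ofReal hcon.le
    exact absurd hq (not_lt.mpr hge)

lemma mainClaim [Finite V] (hl : 0 < ℓ) (hr : 0 ≤ r) (hN : 0 < N)
    (hpos : ∀ e ∈ G.edgeSet, 0 < w e)
    (hbd : ∀ e ∈ G.edgeSet, w e ≤ ℓ) (hZ : Z ⊆ nbhd G w r S) (hH : H = 2 * r / ℓ + 4)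
    (h2 : ∀ v ∈ (Z ∪ R)ᶜ, c' v = c v)
    (hc : HasWeakDiamLE (powerGraph (delVerts G Z) w ℓ) (Z ∪ R)ᶜ (powerGraph G w ℓ) c N) :
    ∀ n : ℕ, ∀ T : Set V, T ⊆ S → T.ncard ≤ n →
      ∀ (x y : V) (p : (colorGraph (powerGraph G w ℓ) Rᶜ c').Walk x y),
        (∀ v ∈ p.support, ∀ s, NearPt G w ℓ H S v s → s ∈ T) →
        ∃ q : (powerGraph G w ℓ).Walk x y,
          (q.length : ℝ) ≤ (N + 1) + n * ((N + 1) + 2 * H + 1) := by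
  have hH0 : 0 ≤ H := by
    rw [hH]
    have : 0 ≤ 2 * r / ℓ := div_nonneg (by linarith) hl.le
    linarith
  intro n
  induction n with
  | zero =>
    intro T hTS hT x y p hcond
    by_cases hnear : ∃ v ∈ p.support, NearV G w ℓ H S v
    · obtain ⟨v, hvmem, s, hNs⟩ := hnear
      have hsT := hcond v hvmem s hNs
      have hTe : T = ∅ := Set.ncard_eq_zero (Set.toFinite T) |>.mp (Nat.le_zero.mp hT)
      rw [hTe] at hsT
      exact absurd hsT (Set.notMem_empty s)
    · push_neg at hnear
      obtain ⟨q, hq⟩ := cleanSuffix hl hr hN hpos hbd hZ hH h2 hc p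
        (fun v hv => hnear v (List.mem_of_mem_tail hv))
      exact ⟨q, by push_cast; linarith⟩
  | succ n ih =>
    intro T hTS hT x y p hcond
    have hbody : 0 ≤ (N + 1) + 2 * H + 1 := by linarith
    by_cases hnear : ∃ v ∈ p.support, NearV G w ℓ H S v
    · obtain ⟨v₀, hv₀, hv₀N⟩ := hnear
      obtain ⟨u, q₁, hQu, hq₁sub, hq₁cl⟩ := findFirst (NearV G w ℓ H S) p.reverse
        ⟨v₀, by rw [Walk.support_reverse, List.mem_reverse]; exact hv₀, hv₀N⟩
      obtain ⟨s₀, hs₀S, wus, hwus⟩ := hQu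
      have humem : u ∈ p.support := by
        have h := hq₁sub q₁.end_mem_support
        rwa [Walk.support_reverse, List.mem_reverse] at h
      have hs₀T : s₀ ∈ T := hcond u humem s₀ ⟨hs₀S, wus, hwus⟩
      have hsfxcl : ∀ v ∈ q₁.reverse.support.tail, ¬ NearV G w ℓ H S v := by
        intro v hv
        rw [Walk.support_reverse, List.tail_reverse,
          List.mem_reverse] at hv
        exact hq₁cl v hv
      obtain ⟨qsfx, hqsfx⟩ := cleanSuffix hl hr hN hpos hbd hZ hH h2 hc q₁.reverse hsfxcl
      obtain ⟨u', r₁, hQu', hr₁sub, hr₁cl⟩ := findFirst (fun v => NearPt G w ℓ H S v s₀) p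
        ⟨u, humem, hs₀S, wus, hwus⟩
      obtain ⟨-, wu's, hwu's⟩ := hQu'
      have hwmid : ((wu's.append wus.reverse).length : ℝ) ≤ 2 * H := by
        rw [Walk.length_append, Walk.length_reverse]
        push_cast
        linarith
      rcases walk_snoc r₁ with ⟨hdrop, rfl⟩ | ⟨v', t, hadj, hsup⟩
      · refine ⟨(wu's.append wus.reverse).append qsfx, ?_⟩
        rw [Walk.length_append]
        push_cast
        push_cast at hwmid
        nlinarith [(Nat.cast_nonneg n : (0:ℝ) ≤ n)]
      · have hcond' : ∀ vv ∈ t.support, ∀ s, NearPt G w ℓ H S vv s → s ∈ T \ {s₀} := by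
          intro vv hvv s hNs
          have hvvdrop : vv ∈ r₁.support.dropLast := by rw [hsup]; exact hvv
          have hvvp : vv ∈ p.support := hr₁sub (List.mem_of_mem_dropLast hvvdrop)
          refine ⟨hcond vv hvvp s hNs, ?_⟩
          intro hss
          rw [Set.mem_singleton_iff] at hss
          subst hss
          exact hr₁cl vv hvvdrop hNs
        have hT' : (T \ {s₀}).ncard ≤ n := by
          have hd := Set.ncard_diff_singleton_of_mem hs₀T
          omega
        obtain ⟨qt, hqt⟩ := ih (T \ {s₀}) (fun a ha => hTS ha.1) hT' x v' t hcond'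
        have hPedge : (powerGraph G w ℓ).Adj v' u' := hadj.1
        refine ⟨qt.append (Walk.cons hPedge ((wu's.append wus.reverse).append qsfx)), ?_⟩
        rw [Walk.length_append, Walk.length_cons, Walk.length_append]
        have hexp : ((n : ℝ) + 1) * ((N + 1) + 2 * H + 1)
            = (n : ℝ) * ((N + 1) + 2 * H + 1) + ((N + 1) + 2 * H + 1) := by ring
        push_cast
        push_cast at hwmid hqt
        linarith
    · push_neg at hnear
      obtain ⟨q, hq⟩ := cleanSuffix hl hr hN hpos hbd hZ hH h2 hc p
        (fun v hv => hnear v (List.mem_of_mem_tail hv))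
      refine ⟨q, ?_⟩
      push_cast
      nlinarith [(Nat.cast_nonneg n : (0:ℝ) ≤ n), hq]

end Aux2

/-- Theorem (Lemma `patching_centered_set_gen`): colourings of `(G,φ)^ℓ − R` obtained by
combining a colouring of `((G,φ)−Z)^ℓ − R` of weak diameter in `(G,φ)^ℓ` at most `N` with an
arbitrary colouring of `Z`, where `Z ⊆ N_{(G,φ)}^{≤r}[S]` with `|S| ≤ k`, have weak diameter in
`(G,φ)^ℓ` at most `N*`. -/
theorem patching_centered_set_gen (k : ℕ) (r : ℝ) (hr : 0 ≤ r) (ℓ N : ℝ)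
    (hℓ : 0 < ℓ) (hN : 0 < N) :
    ∃ Nstar : ℝ, (k + 1 : ℝ) * N ≤ Nstar ∧
      ∀ W : WGraph, W.IsBounded ℓ →
        ∀ S : Set W.V, S.ncard ≤ k →
          ∀ Z : Set W.V, Z ⊆ nbhd W.G W.w r S →
            ∀ m : ℕ, 0 < m → ∀ R : Set W.V, ∀ c cZ : W.V → Fin m,
              HasWeakDiamLE (powerGraph (delVerts W.G Z) W.w ℓ) (Z ∪ R)ᶜ
                (powerGraph W.G W.w ℓ) c N →
              ∀ c' : W.V → Fin m,
                (∀ v ∈ Z \ R, c' v = cZ v) →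
                (∀ v ∈ (Z ∪ R)ᶜ, c' v = c v) →
                HasWeakDiamLE (powerGraph W.G W.w ℓ) Rᶜ (powerGraph W.G W.w ℓ) c' Nstar := by
  refine ⟨(N + 1) + k * ((N + 1) + 2 * (2 * r / ℓ + 4) + 1), ?_, ?_⟩
  · have h0 : 0 ≤ 2 * r / ℓ := div_nonneg (by linarith) hℓ.le
    have hk : (0:ℝ) ≤ k := Nat.cast_nonneg k
    nlinarith [mul_nonneg hk (show (0:ℝ) ≤ 2 * (2 * r / ℓ + 4) + 2 by linarith)]
  · intro W hbdd S hS Z hZ m hm R c cZ hc c' h1 h2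
    haveI : Finite W.V := W.fin
    intro x hx y hy hrch
    obtain ⟨p⟩ := hrch
    obtain ⟨q, hq⟩ := mainClaim hℓ hr hN W.pos hbdd hZ rfl h2 hc k S le_rfl hS x y p
      (fun v _ s hNs => hNs.1)
    refine le_trans (iInf_le _ q) ?_
    rw [← ENNReal.ofReal_natCast]
    exact ENNReal.ofReal_le_ofReal hq
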